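/- A positive linear map φ: M_n → M_m satisfies the Schwarz inequality φ(K*K) ≥ φ(K)* φ(K) for all K ∈ M_n if and only if for every positive definite X ∈ M_m, the operator inequality φ* ∘ R_X ∘ φ ≤ R_{φ*(X)} holds as operators on the Hilbert–Schmidt space M_n, where R_X(A) := A X is right multiplication. -/

import Mathlib

open Matrix ComplexOrder

/-- The trace of a positive semidefinite matrix is nonnegative. -/
lemma psd_trace_nonneg' {k : ℕ} {M : Matrix (Fin k) (Fin k) ℂ} (hM : M.PosSemidef) :
    0 ≤ M.trace := by
  rw [Matrix.trace]
  refine Finset.sum_nonneg fun i _ => ?_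
  simpa [dotProduct, Matrix.mulVec, Pi.single_apply] using
    (Matrix.posSemidef_iff_dotProduct_mulVec.mp hM).2 (Pi.single i 1)

/-- The trace of a product of two PSD matrices is nonnegative. -/
lemma psd_trace_mul_nonneg' {k : ℕ} {M N : Matrix (Fin k) (Fin k) ℂ}
    (hM : M.PosSemidef) (hN : N.PosSemidef) : 0 ≤ (M * N).trace := by
  obtain ⟨C, rfl⟩ : ∃ C : Matrix (Fin k) (Fin k) ℂ, M = Cᴴ * C := by
    open scoped MatrixOrder in
    exact ⟨CFC.sqrt M, by
      rw [(CFC.sqrt_nonneg M).posSemidef.1.eq, CFC.sqrt_mul_sqrt_self M hM.nonneg]⟩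
  rw [Matrix.mul_assoc, Matrix.trace_mul_comm]
  exact psd_trace_nonneg' (hN.mul_mul_conjTranspose_same C)

lemma trace_mul_vecMulVec' {k : ℕ} (M : Matrix (Fin k) (Fin k) ℂ) (v : Fin k → ℂ) :
    (M * Matrix.vecMulVec v (star v)).trace = star v ⬝ᵥ M *ᵥ v := by
  simp only [Matrix.trace, Matrix.diag, Matrix.mul_apply, Matrix.vecMulVec_apply,
    dotProduct, Matrix.mulVec, Finset.mul_sum]
  exact Finset.sum_congr rfl fun i _ => Finset.sum_congr rfl fun j _ => by ring

lemma vecMulVec_posSemidef' {k : ℕ} (v : Fin k → ℂ) :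
    (Matrix.vecMulVec v (star v)).PosSemidef := by
  have hrw : Matrix.vecMulVec v (star v)
      = (Matrix.replicateRow Unit (star v))ᴴ * Matrix.replicateRow Unit (star v) := by
    rw [Matrix.vecMulVec_eq Unit]
    congr 1
    ext i j
    simp [Matrix.replicateRow, Matrix.replicateCol]
  rw [hrw]
  exact Matrix.posSemidef_conjTranspose_mul_self _

lemma smul_one_posDef' {k : ℕ} (ε : ℝ) (hε : 0 < ε) :
    ((ε : ℂ) • (1 : Matrix (Fin k) (Fin k) ℂ)).PosDef := by
  rw [Matrix.posDef_iff_dotProduct_mulVec]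
  constructor
  · simp [Matrix.IsHermitian, Matrix.conjTranspose_smul, Complex.conj_ofReal]
  · intro x hx
    simp only [Matrix.smul_mulVec, Matrix.one_mulVec, dotProduct_smul]
    rw [smul_eq_mul]
    have := Matrix.dotProduct_star_self_pos_iff.mpr hx
    positivity

/-- A Hermitian matrix with nonnegative trace pairing against all positive definite
matrices is positive semidefinite. -/
lemma posSemidef_of_trace_mul_posDef' {k : ℕ} {M : Matrix (Fin k) (Fin k) ℂ}
    (hM : M.IsHermitian) (h : ∀ X : Matrix (Fin k) (Fin k) ℂ, X.PosDef → 0 ≤ (M * X).trace) :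
    M.PosSemidef := by
  refine Matrix.posSemidef_iff_dotProduct_mulVec.mpr ⟨hM, fun v => ?_⟩
  set s : ℂ := star v ⬝ᵥ M *ᵥ v with hs
  have hkey : ∀ ε : ℝ, 0 < ε → 0 ≤ s + (ε : ℂ) * M.trace := by
    intro ε hε
    have hX : (Matrix.vecMulVec v (star v) + (ε : ℂ) • 1).PosDef :=
      Matrix.PosDef.posSemidef_add (vecMulVec_posSemidef' v) (smul_one_posDef' ε hε)
    have h2 := h _ hX
    rwa [Matrix.mul_add, Matrix.trace_add, trace_mul_vecMulVec', Matrix.mul_smul,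
      Matrix.mul_one, Matrix.trace_smul, smul_eq_mul] at h2
  have hcomp : ∀ ε : ℝ, 0 < ε → 0 ≤ s.re + ε * M.trace.re ∧ 0 = s.im + ε * M.trace.im := by
    intro ε hε
    have h2 := hkey ε hε
    rw [Complex.le_def] at h2
    constructor
    · simpa [Complex.add_re, Complex.mul_re] using h2.1
    · simpa [Complex.add_im, Complex.mul_im] using h2.2
  have h1 := hcomp 1 one_pos
  have h2 := hcomp 2 two_pos
  have him : s.im = 0 := by
    have a1 := h1.2; have a2 := h2.2; linarith
  have hre : 0 ≤ s.re := by
    by_contra hneg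
    push_neg at hneg
    set d : ℝ := |M.trace.re| + 1 with hd
    have hdpos : 0 < d := by positivity
    set ε : ℝ := -s.re / (2 * d) with hε
    have hεpos : 0 < ε := by
      apply div_pos (by linarith) (by linarith)
    have hb := (hcomp ε hεpos).1
    have hb1 : ε * M.trace.re ≤ ε * |M.trace.re| :=
      mul_le_mul_of_nonneg_left (le_abs_self _) hεpos.le
    have hb2 : ε * d = -s.re / 2 := by
      rw [hε]
      field_simp
    have hb3 : ε * |M.trace.re| < ε * d := by
      rw [hd]
      have := mul_lt_mul_of_pos_left (lt_add_one |M.trace.re|) hεpos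
      exact this
    linarith
  rw [Complex.le_def]
  exact ⟨by simpa using hre, by simp [him]⟩

/-- Key trace identity. -/
lemma key_trace_identity' {n m : ℕ}
    (φ : Matrix (Fin n) (Fin n) ℂ →ₗ[ℂ] Matrix (Fin m) (Fin m) ℂ)
    (ψ : Matrix (Fin m) (Fin m) ℂ →ₗ[ℂ] Matrix (Fin n) (Fin n) ℂ)
    (hadj : ∀ (A : Matrix (Fin m) (Fin m) ℂ) (B : Matrix (Fin n) (Fin n) ℂ),
      (Aᴴ * φ B).trace = ((ψ A)ᴴ * B).trace)
    (A : Matrix (Fin n) (Fin n) ℂ) (X : Matrix (Fin m) (Fin m) ℂ) :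
    (Aᴴ * (A * ψ X - ψ (φ A * X))).trace
      = (((φ (Aᴴ * A))ᴴ - (φ A)ᴴ * φ A) * X).trace := by
  have hB : (Aᴴ * A)ᴴ = Aᴴ * A := (Matrix.isHermitian_conjTranspose_mul_self A).eq
  have h1 : ((ψ X) * (Aᴴ * A)).trace = ((φ (Aᴴ * A))ᴴ * X).trace := by
    apply star_injective
    rw [← Matrix.trace_conjTranspose, ← Matrix.trace_conjTranspose,
      Matrix.conjTranspose_mul (ψ X) (Aᴴ * A), hB,
      Matrix.conjTranspose_mul ((φ (Aᴴ * A))ᴴ) X,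
      Matrix.conjTranspose_conjTranspose,
      Matrix.trace_mul_comm (Aᴴ * A) ((ψ X)ᴴ)]
    exact (hadj X (Aᴴ * A)).symm
  have h2 : (Aᴴ * ψ (φ A * X)).trace = ((φ A)ᴴ * φ A * X).trace := by
    apply star_injective
    rw [← Matrix.trace_conjTranspose, ← Matrix.trace_conjTranspose,
      Matrix.conjTranspose_mul (Aᴴ) (ψ (φ A * X)),
      Matrix.conjTranspose_conjTranspose A,
      ← hadj (φ A * X) A,
      Matrix.conjTranspose_mul (φ A) X,
      Matrix.mul_assoc (Xᴴ) ((φ A)ᴴ) (φ A),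
      Matrix.conjTranspose_mul ((φ A)ᴴ * φ A) X,
      Matrix.conjTranspose_mul ((φ A)ᴴ) (φ A),
      Matrix.conjTranspose_conjTranspose (φ A)]
  rw [Matrix.mul_sub, Matrix.trace_sub, Matrix.sub_mul, Matrix.trace_sub,
    ← Matrix.mul_assoc, Matrix.trace_mul_comm (Aᴴ * A) (ψ X), h1, h2]

theorem schwarz_iff_right_mult_op_ineq {n m : ℕ}
    (φ : Matrix (Fin n) (Fin n) ℂ →ₗ[ℂ] Matrix (Fin m) (Fin m) ℂ)
    (hφ : ∀ X : Matrix (Fin n) (Fin n) ℂ, X.PosSemidef → (φ X).PosSemidef)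
    (ψ : Matrix (Fin m) (Fin m) ℂ →ₗ[ℂ] Matrix (Fin n) (Fin n) ℂ)
    (hadj : ∀ (A : Matrix (Fin m) (Fin m) ℂ) (B : Matrix (Fin n) (Fin n) ℂ),
      (Aᴴ * φ B).trace = ((ψ A)ᴴ * B).trace) :
    (∀ K : Matrix (Fin n) (Fin n) ℂ,
        (φ (Kᴴ * K) - (φ K)ᴴ * φ K).PosSemidef) ↔
      (∀ X : Matrix (Fin m) (Fin m) ℂ, X.PosDef →
        ∀ A : Matrix (Fin n) (Fin n) ℂ,
          0 ≤ (Aᴴ * (A * ψ X - ψ (φ A * X))).trace) := by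
  constructor
  · intro hS X hX A
    rw [key_trace_identity' φ ψ hadj A X,
      (hφ (Aᴴ * A) (Matrix.posSemidef_conjTranspose_mul_self A)).1.eq]
    exact psd_trace_mul_nonneg' (hS A) hX.posSemidef
  · intro h K
    have hB : (φ (Kᴴ * K)).PosSemidef := hφ _ (Matrix.posSemidef_conjTranspose_mul_self K)
    have hHerm : (φ (Kᴴ * K) - (φ K)ᴴ * φ K).IsHermitian :=
      hB.1.sub (Matrix.isHermitian_conjTranspose_mul_self (φ K))
    refine posSemidef_of_trace_mul_posDef' hHerm fun X hX => ?_
    have h2 := h X hX K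
    rwa [key_trace_identity' φ ψ hadj K X, hB.1.eq] at h2
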